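/- For every q ≥ 3, the polynomial x³ − (q−2)x² − (q−3)x − (q−2) has a unique positive real root r, and the limit ι_q = lim_{n→∞} (1/n) log₂ I_q(n) exists and equals log₂ r. -/

import Mathlib

/-- A single tandem duplication of length `k`: `u ++ v ++ w ↦ u ++ v ++ v ++ w` with `|v| = k`. -/
def DupStepLen (q k : ℕ) (x y : List (Fin q)) : Prop :=
  ∃ u v w : List (Fin q), v.length = k ∧ x = u ++ v ++ w ∧ y = u ++ v ++ v ++ w

/-- `DescL q ks x y`: `y` is obtained from `x` by successive tandem duplications whose
lengths are given by the list `ks`. -/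
def DescL (q : ℕ) : List ℕ → List (Fin q) → List (Fin q) → Prop
  | [], x, y => y = x
  | k :: ks, x, y => ∃ z, DupStepLen q k x z ∧ DescL q ks z y

/-- `y ∈ D^t(x)`: `y` is obtained from `x` by `t` tandem duplications, each of length ≤ 3. -/
def DescT (q t : ℕ) (x y : List (Fin q)) : Prop :=
  ∃ ks : List ℕ, ks.length = t ∧ (∀ k ∈ ks, 1 ≤ k ∧ k ≤ 3) ∧ DescL q ks x y

/-- `y` is obtained from `x` by `t` tandem duplications of length ≤ 3, exactly `b` of which
have length 3. -/
def DescTB (q t b : ℕ) (x y : List (Fin q)) : Prop :=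
  ∃ ks : List ℕ, ks.length = t ∧ (∀ k ∈ ks, 1 ≤ k ∧ k ≤ 3) ∧ ks.count 3 = b ∧ DescL q ks x y

/-- `y ∈ D*(x)`: `y` is a descendant of `x` under tandem duplications of length ≤ 3. -/
def Desc (q : ℕ) (x y : List (Fin q)) : Prop := ∃ t, DescT q t x y

/-- Two strings are confusable iff they have a common descendant. -/
def Confusable (q : ℕ) (x y : List (Fin q)) : Prop := ∃ z, Desc q x z ∧ Desc q y z

/-- A zero-error code: a set of pairwise non-confusable strings. -/
def ZeroErrorCode (q : ℕ) (C : Set (List (Fin q))) : Prop :=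
  ∀ x ∈ C, ∀ y ∈ C, x ≠ y → ¬ Confusable q x y

/-- A string is irreducible if it contains no substring `a·a`, `a·b·a·b`, or `a·b·c·a·b·c`. -/
def IrreducibleStr (q : ℕ) (x : List (Fin q)) : Prop :=
  (∀ a : Fin q, ¬ [a, a] <:+: x) ∧
  (∀ a b : Fin q, ¬ [a, b, a, b] <:+: x) ∧
  (∀ a b c : Fin q, ¬ [a, b, c, a, b, c] <:+: x)

/-- `I_q(n)`: the number of irreducible strings of length `n` over the alphabet `A_q`. -/
noncomputable def IrrCount (q n : ℕ) : ℕ :=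
  Set.ncard {x : List (Fin q) | x.length = n ∧ IrreducibleStr q x}

/-- The binary entropy function in base 2 (with `H(0) = H(1) = 0`, since `logb 2 0 = 0`). -/
noncomputable def binH (β : ℝ) : ℝ :=
  -β * Real.logb 2 β - (1 - β) * Real.logb 2 (1 - β)

namespace ZEC
variable {q : ℕ}

/-- pattern predicates -/
def P1 (x : List (Fin q)) : Prop := ∃ a b : Fin q, [a, b, a] <+: x
def Qp (x : List (Fin q)) : Prop := ∃ a b c : Fin q, [a, b, c, a] <+: x
def P3 (x : List (Fin q)) : Prop := ∃ a b c : Fin q, [a, b, c, a, b] <+: x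

lemma irr_of_infix {x y : List (Fin q)} (h : x <:+: y) (hy : IrreducibleStr q y) :
    IrreducibleStr q x := by
  obtain ⟨h1, h2, h3⟩ := hy
  exact ⟨fun a ha => h1 a (ha.trans h), fun a b hab => h2 a b (hab.trans h),
    fun a b c habc => h3 a b c (habc.trans h)⟩

lemma irr_tail {c : Fin q} {y : List (Fin q)} (h : IrreducibleStr q (c :: y)) :
    IrreducibleStr q y :=
  irr_of_infix (List.suffix_cons c y).isInfix h

lemma irr_cons_iff (c : Fin q) (y : List (Fin q)) :
    IrreducibleStr q (c :: y) ↔ IrreducibleStr q y ∧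
      (∀ a : Fin q, ¬ [a, a] <+: c :: y) ∧
      (∀ a b : Fin q, ¬ [a, b, a, b] <+: c :: y) ∧
      (∀ a b d : Fin q, ¬ [a, b, d, a, b, d] <+: c :: y) := by
  constructor
  · intro h
    refine ⟨irr_tail h, fun a ha => h.1 a (ha.isInfix), fun a b hab => h.2.1 a b hab.isInfix,
      fun a b d habd => h.2.2 a b d habd.isInfix⟩
  · rintro ⟨⟨h1, h2, h3⟩, g1, g2, g3⟩
    refine ⟨fun a ha => ?_, fun a b hab => ?_, fun a b d habd => ?_⟩
    · rcases List.infix_cons_iff.1 ha with h | h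
      exacts [g1 a h, h1 a h]
    · rcases List.infix_cons_iff.1 hab with h | h
      exacts [g2 a b h, h2 a b h]
    · rcases List.infix_cons_iff.1 habd with h | h
      exacts [g3 a b d h, h3 a b d h]

/-- extension characterization on explicitly long lists -/
lemma irr_cons_long_iff (c y0 y1 y2 y3 y4 : Fin q) (t : List (Fin q)) :
    IrreducibleStr q (c :: y0 :: y1 :: y2 :: y3 :: y4 :: t) ↔
      IrreducibleStr q (y0 :: y1 :: y2 :: y3 :: y4 :: t) ∧
      c ≠ y0 ∧ (y0 = y2 → c ≠ y1) ∧ (y0 = y3 ∧ y1 = y4 → c ≠ y2) := by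
  rw [irr_cons_iff]
  constructor
  · rintro ⟨hy, g1, g2, g3⟩
    refine ⟨hy, fun h => g1 c (by simp [h, List.cons_prefix_cons]), ?_, ?_⟩
    · rintro h02 rfl
      exact g2 c y0 (by simp [h02, List.cons_prefix_cons])
    · rintro ⟨h03, h14⟩ rfl
      exact g3 c y0 y1 (by simp [h03, h14, List.cons_prefix_cons])
  · rintro ⟨hy, hc0, hc1, hc2⟩
    refine ⟨hy, ?_, ?_, ?_⟩
    · intro a ha
      rw [List.cons_prefix_cons, List.cons_prefix_cons] at ha
      obtain ⟨rfl, rfl, -⟩ := ha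
      exact hc0 rfl
    · intro a b hab
      simp only [List.cons_prefix_cons] at hab
      obtain ⟨rfl, rfl, rfl, rfl, -⟩ := hab
      exact hc1 rfl rfl
    · intro a b d habd
      simp only [List.cons_prefix_cons] at habd
      obtain ⟨rfl, rfl, rfl, rfl, rfl, rfl, -⟩ := habd
      exact hc2 ⟨rfl, rfl⟩ rfl

lemma ne01 {y0 y1 : Fin q} {t : List (Fin q)} (h : IrreducibleStr q (y0 :: y1 :: t)) :
    y0 ≠ y1 := by
  rintro rfl
  exact h.1 y0 ⟨[], t, rfl⟩

/-- pattern predicates on long lists -/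
lemma P1_cons (c y0 y1 : Fin q) (t : List (Fin q)) :
    P1 (c :: y0 :: y1 :: t) ↔ c = y1 := by
  constructor
  · rintro ⟨a, b, h⟩
    simp only [List.cons_prefix_cons] at h
    obtain ⟨rfl, rfl, rfl, -⟩ := h
    rfl
  · rintro rfl
    exact ⟨c, y0, by simp [List.cons_prefix_cons]⟩

lemma Qp_cons (c y0 y1 y2 : Fin q) (t : List (Fin q)) :
    Qp (c :: y0 :: y1 :: y2 :: t) ↔ c = y2 := by
  constructor
  · rintro ⟨a, b, d, h⟩
    simp only [List.cons_prefix_cons] at h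
    obtain ⟨rfl, rfl, rfl, rfl, -⟩ := h
    rfl
  · rintro rfl
    exact ⟨c, y0, y1, by simp [List.cons_prefix_cons]⟩

lemma P3_cons (c y0 y1 y2 y3 : Fin q) (t : List (Fin q)) :
    P3 (c :: y0 :: y1 :: y2 :: y3 :: t) ↔ c = y2 ∧ y0 = y3 := by
  constructor
  · rintro ⟨a, b, d, h⟩
    simp only [List.cons_prefix_cons] at h
    obtain ⟨rfl, rfl, rfl, rfl, rfl, -⟩ := h
    exact ⟨rfl, rfl⟩
  · rintro ⟨rfl, rfl⟩
    exact ⟨c, y0, y1, by simp [List.cons_prefix_cons]⟩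

lemma P3_Qp {x : List (Fin q)} (h : P3 x) : Qp x := by
  obtain ⟨a, b, d, h⟩ := h
  exact ⟨a, b, d, List.IsPrefix.trans ⟨[b], rfl⟩ h⟩


open Finset

def allL (q : ℕ) : ℕ → Finset (List (Fin q))
  | 0 => {[]}
  | n+1 => (univ : Finset (Fin q)).biUnion fun c => (allL q n).image (c :: ·)

lemma mem_allL {n : ℕ} {x : List (Fin q)} : x ∈ allL q n ↔ x.length = n := by
  induction n generalizing x with
  | zero => cases x <;> simp [allL]
  | succ n ih =>
    cases x with
    | nil => simp [allL]
    | cons c y => simp [allL, ih]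

open scoped Classical

noncomputable def TF (q n : ℕ) (R : List (Fin q) → Prop) : Finset (List (Fin q)) :=
  (allL q n).filter (fun x => IrreducibleStr q x ∧ R x)

lemma mem_TF {n : ℕ} {R : List (Fin q) → Prop} {x : List (Fin q)} :
    x ∈ TF q n R ↔ x.length = n ∧ IrreducibleStr q x ∧ R x := by
  classical
  simp only [TF, Finset.mem_filter, mem_allL]

lemma irr_tail' {c : Fin q} {y : List (Fin q)} (h : IrreducibleStr q (c :: y)) :
    IrreducibleStr q y := by
  obtain ⟨h1, h2, h3⟩ := h
  have hsuf : y <:+: c :: y := (List.suffix_cons c y).isInfix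
  exact ⟨fun a ha => h1 a (ha.trans hsuf), fun a b hab => h2 a b (hab.trans hsuf),
    fun a b d habd => h3 a b d (habd.trans hsuf)⟩

lemma TF_succ (n : ℕ) (R : List (Fin q) → Prop) :
    TF q (n+1) R = (TF q n (fun _ => True)).biUnion
      (fun y => (((univ : Finset (Fin q)).filter
        (fun c => c :: y ∈ TF q (n+1) R)).image (· :: y))) := by
  classical
  ext x
  simp only [Finset.mem_biUnion, Finset.mem_image, Finset.mem_filter, Finset.mem_univ,
    true_and]
  constructor
  · intro hx
    have hx' := mem_TF.1 hx
    obtain ⟨hlen, hirr, hR⟩ := hx'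
    cases x with
    | nil => simp at hlen
    | cons c y =>
      exact ⟨y, mem_TF.2 ⟨by simpa using hlen, irr_tail' hirr, trivial⟩, c, hx, rfl⟩
  · rintro ⟨y, -, c, hc, rfl⟩
    exact hc

lemma card_TF_succ (n : ℕ) (R : List (Fin q) → Prop) :
    (TF q (n+1) R).card = ∑ y ∈ TF q n (fun _ => True),
      (((univ : Finset (Fin q)).filter (fun c => c :: y ∈ TF q (n+1) R))).card := by
  classical
  conv_lhs => rw [TF_succ]
  rw [Finset.card_biUnion]
  · refine Finset.sum_congr rfl fun y _ => Finset.card_image_of_injective _ ?_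
    intro a b h
    simpa using h
  · intro y1 h1 y2 h2 hne
    simp only [Finset.disjoint_left, Finset.mem_image]
    rintro x ⟨c, -, rfl⟩ ⟨c', -, h⟩
    rw [List.cons.injEq] at h
    exact hne h.2.symm

lemma card_TF_eq_sum (n : ℕ) (R : List (Fin q) → Prop) :
    (TF q n R).card = ∑ y ∈ TF q n (fun _ => True), if R y then 1 else 0 := by
  classical
  rw [← Finset.card_filter]
  congr 1
  ext x
  simp only [mem_TF, Finset.mem_filter]
  tauto

lemma exists5 {x : List (Fin q)} (h : 5 ≤ x.length) :
    ∃ y0 y1 y2 y3 y4 t, x = y0 :: y1 :: y2 :: y3 :: y4 :: t := by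
  rcases x with _ | ⟨y0, _ | ⟨y1, _ | ⟨y2, _ | ⟨y3, _ | ⟨y4, t⟩⟩⟩⟩⟩ <;> simp at h
  exact ⟨y0, y1, y2, y3, y4, t, rfl⟩

lemma card_filter_ne_one (a : Fin q) :
    ((univ : Finset (Fin q)).filter (fun c => c ≠ a)).card = q - 1 := by
  classical
  have : ((univ : Finset (Fin q)).filter (fun c => c ≠ a)) = ({a} : Finset (Fin q))ᶜ := by
    ext c; simp
  rw [this, Finset.card_compl]
  simp

lemma card_filter_ne_two {a b : Fin q} (hab : a ≠ b) :
    ((univ : Finset (Fin q)).filter (fun c => c ≠ a ∧ c ≠ b)).card = q - 2 := by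
  classical
  have : ((univ : Finset (Fin q)).filter (fun c => c ≠ a ∧ c ≠ b))
      = ({a, b} : Finset (Fin q))ᶜ := by
    ext c; simp [not_or]
  rw [this, Finset.card_compl, Finset.card_pair hab]
  simp

-- ===== fiber lemmas =====
section Fibers
open scoped Classical

variable {y0 y1 y2 y3 y4 : Fin q} {t : List (Fin q)}

lemma filter_mem_eq (R : List (Fin q) → Prop) (y : List (Fin q)) :
    ((univ : Finset (Fin q)).filter (fun c => c :: y ∈ TF q (y.length + 1) R))
      = ((univ : Finset (Fin q)).filter
          (fun c => IrreducibleStr q (c :: y) ∧ R (c :: y))) :=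
  Finset.filter_congr (fun c _ => by simp [mem_TF])

lemma fiber_true (hirr : IrreducibleStr q (y0 :: y1 :: y2 :: y3 :: y4 :: t)) :
    ((univ : Finset (Fin q)).filter (fun c =>
      c :: y0 :: y1 :: y2 :: y3 :: y4 :: t ∈
        TF q ((y0 :: y1 :: y2 :: y3 :: y4 :: t).length + 1) (fun _ => True))).card
    = if (y0 = y2) ∨ (y0 = y3 ∧ y1 = y4) then q - 2 else q - 1 := by
  rw [filter_mem_eq]
  have h01 : y0 ≠ y1 := ne01 hirr
  have h12 : y1 ≠ y2 := ne01 (irr_tail hirr)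
  have h23 : y2 ≠ y3 := ne01 (irr_tail (irr_tail hirr))
  by_cases h02 : y0 = y2
  · have hnp3 : ¬ (y0 = y3 ∧ y1 = y4) := by
      rintro ⟨h03, -⟩; exact h23 (h02 ▸ h03 ▸ rfl)
    rw [if_pos (Or.inl h02)]
    rw [← card_filter_ne_two h01]
    congr 1
    ext c
    simp only [Finset.mem_filter, Finset.mem_univ, true_and, irr_cons_long_iff, and_true]
    constructor
    · rintro ⟨-, hc0, hc1, -⟩; exact ⟨hc0, hc1 h02⟩
    · rintro ⟨hc0, hc1⟩
      exact ⟨hirr, hc0, fun _ => hc1, fun h3 => (hnp3 h3).elim⟩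
  · by_cases h3 : y0 = y3 ∧ y1 = y4
    · rw [if_pos (Or.inr h3)]
      rw [← card_filter_ne_two h02]
      congr 1
      ext c
      simp only [Finset.mem_filter, Finset.mem_univ, true_and, irr_cons_long_iff, and_true]
      constructor
      · rintro ⟨-, hc0, -, hc2⟩; exact ⟨hc0, hc2 h3⟩
      · rintro ⟨hc0, hc2⟩
        exact ⟨hirr, hc0, fun h => (h02 h).elim, fun _ => hc2⟩
    · rw [if_neg (by tauto)]
      rw [← card_filter_ne_one y0]
      congr 1
      ext c
      simp only [Finset.mem_filter, Finset.mem_univ, true_and, irr_cons_long_iff, and_true]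
      constructor
      · rintro ⟨-, hc0, -, -⟩; exact hc0
      · intro hc0
        exact ⟨hirr, hc0, fun h => (h02 h).elim, fun h => (h3 h).elim⟩

lemma fiber_P1 (hirr : IrreducibleStr q (y0 :: y1 :: y2 :: y3 :: y4 :: t)) :
    ((univ : Finset (Fin q)).filter (fun c =>
      c :: y0 :: y1 :: y2 :: y3 :: y4 :: t ∈
        TF q ((y0 :: y1 :: y2 :: y3 :: y4 :: t).length + 1) P1)).card
    = if y0 = y2 then 0 else 1 := by
  rw [filter_mem_eq]
  have h01 : y0 ≠ y1 := ne01 hirr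
  have h12 : y1 ≠ y2 := ne01 (irr_tail hirr)
  by_cases h02 : y0 = y2
  · rw [if_pos h02]
    convert Finset.card_empty
    ext c
    simp only [Finset.mem_filter, Finset.mem_univ, true_and, irr_cons_long_iff, P1_cons,
      Finset.notMem_empty, iff_false]
    rintro ⟨⟨-, -, hc1, -⟩, rfl⟩
    exact hc1 h02 rfl
  · rw [if_neg h02]
    have : ((univ : Finset (Fin q)).filter
        (fun c => IrreducibleStr q (c :: y0 :: y1 :: y2 :: y3 :: y4 :: t) ∧
          P1 (c :: y0 :: y1 :: y2 :: y3 :: y4 :: t))) = {y1} := by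
      ext c
      simp only [Finset.mem_filter, Finset.mem_univ, true_and, irr_cons_long_iff, P1_cons,
        Finset.mem_singleton]
      constructor
      · rintro ⟨-, h⟩; exact h
      · rintro rfl
        exact ⟨⟨hirr, fun h => h01 h.symm, fun h => (h02 h).elim,
          fun _ h => h12 h⟩, rfl⟩
    rw [this, Finset.card_singleton]

lemma fiber_Qp (hirr : IrreducibleStr q (y0 :: y1 :: y2 :: y3 :: y4 :: t)) :
    ((univ : Finset (Fin q)).filter (fun c =>
      c :: y0 :: y1 :: y2 :: y3 :: y4 :: t ∈
        TF q ((y0 :: y1 :: y2 :: y3 :: y4 :: t).length + 1) Qp)).card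
    = if (y0 = y2) ∨ (y0 = y3 ∧ y1 = y4) then 0 else 1 := by
  rw [filter_mem_eq]
  have h12 : y1 ≠ y2 := ne01 (irr_tail hirr)
  by_cases hbad : (y0 = y2) ∨ (y0 = y3 ∧ y1 = y4)
  · rw [if_pos hbad]
    convert Finset.card_empty
    ext c
    simp only [Finset.mem_filter, Finset.mem_univ, true_and, irr_cons_long_iff, Qp_cons,
      Finset.notMem_empty, iff_false]
    rintro ⟨⟨-, hc0, -, hc2⟩, rfl⟩
    rcases hbad with h02 | h3
    · exact hc0 h02.symm
    · exact hc2 h3 rfl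
  · rw [if_neg hbad]
    obtain ⟨h02, hnp3⟩ : ¬ y0 = y2 ∧ ¬ (y0 = y3 ∧ y1 = y4) := by tauto
    have : ((univ : Finset (Fin q)).filter
        (fun c => IrreducibleStr q (c :: y0 :: y1 :: y2 :: y3 :: y4 :: t) ∧
          Qp (c :: y0 :: y1 :: y2 :: y3 :: y4 :: t))) = {y2} := by
      ext c
      simp only [Finset.mem_filter, Finset.mem_univ, true_and, irr_cons_long_iff, Qp_cons,
        Finset.mem_singleton]
      constructor
      · rintro ⟨-, h⟩; exact h
      · rintro rfl
        exact ⟨⟨hirr, fun h => h02 h.symm, fun _ h => h12 h.symm,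
          fun h => (hnp3 h).elim⟩, rfl⟩
    rw [this, Finset.card_singleton]

lemma fiber_P3 (hirr : IrreducibleStr q (y0 :: y1 :: y2 :: y3 :: y4 :: t)) :
    ((univ : Finset (Fin q)).filter (fun c =>
      c :: y0 :: y1 :: y2 :: y3 :: y4 :: t ∈
        TF q ((y0 :: y1 :: y2 :: y3 :: y4 :: t).length + 1) P3)).card
    = if (y0 = y3) ∧ ¬ (y0 = y3 ∧ y1 = y4) then 1 else 0 := by
  rw [filter_mem_eq]
  have h12 : y1 ≠ y2 := ne01 (irr_tail hirr)
  have h23 : y2 ≠ y3 := ne01 (irr_tail (irr_tail hirr))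
  by_cases hg : (y0 = y3) ∧ ¬ (y0 = y3 ∧ y1 = y4)
  · rw [if_pos hg]
    obtain ⟨h03, hnp3⟩ := hg
    have h02 : y0 ≠ y2 := fun h => h23 (h ▸ h03)
    have : ((univ : Finset (Fin q)).filter
        (fun c => IrreducibleStr q (c :: y0 :: y1 :: y2 :: y3 :: y4 :: t) ∧
          P3 (c :: y0 :: y1 :: y2 :: y3 :: y4 :: t))) = {y2} := by
      ext c
      simp only [Finset.mem_filter, Finset.mem_univ, true_and, irr_cons_long_iff, P3_cons,
        Finset.mem_singleton]
      constructor
      · rintro ⟨-, h, -⟩; exact h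
      · rintro rfl
        exact ⟨⟨hirr, fun h => h02 h.symm, fun _ h => h12 h.symm,
          fun h => (hnp3 h).elim⟩, rfl, h03⟩
    rw [this, Finset.card_singleton]
  · rw [if_neg hg]
    convert Finset.card_empty
    ext c
    simp only [Finset.mem_filter, Finset.mem_univ, true_and, irr_cons_long_iff, P3_cons,
      Finset.notMem_empty, iff_false]
    rintro ⟨⟨-, -, -, hc2⟩, rfl, h03⟩
    exact hg ⟨h03, fun h => hc2 h rfl⟩

end Fibers

-- ===== counts and identities =====
section Counts
open scoped Classical

noncomputable def Ic (q n : ℕ) : ℕ := (TF q n (fun _ => True)).card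
noncomputable def Bc (q n : ℕ) : ℕ := (TF q n P1).card
noncomputable def Qc (q n : ℕ) : ℕ := (TF q n Qp).card
noncomputable def Dc (q n : ℕ) : ℕ := (TF q n P3).card

variable {n : ℕ} (hq : 3 ≤ q) (hn : 5 ≤ n)

include hq hn

lemma id1 : Ic q (n+1) + Bc q n + Dc q n = (q-1) * Ic q n := by
  rw [Ic, card_TF_succ, Bc, card_TF_eq_sum, Dc, card_TF_eq_sum, Ic,
    Finset.card_eq_sum_ones, Finset.mul_sum, ← Finset.sum_add_distrib,
    ← Finset.sum_add_distrib]
  refine Finset.sum_congr rfl fun y hy => ?_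
  rw [mem_TF] at hy
  obtain ⟨hlen, hirr, -⟩ := hy
  subst hlen
  obtain ⟨y0, y1, y2, y3, y4, t, rfl⟩ := exists5 (by simpa using hn)
  have h23 : y2 ≠ y3 := ne01 (irr_tail (irr_tail hirr))
  rw [fiber_true hirr, P1_cons, P3_cons]
  by_cases h02 : y0 = y2
  · have h3 : ¬ (y0 = y3 ∧ y1 = y4) := fun h => h23 (h02 ▸ h.1 ▸ rfl)
    rw [if_pos (Or.inl h02), if_pos h02, if_neg h3]
    omega
  · by_cases h3 : y0 = y3 ∧ y1 = y4
    · rw [if_pos (Or.inr h3), if_neg h02, if_pos h3]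
      omega
    · rw [if_neg (by tauto), if_neg h02, if_neg h3]
      omega

lemma id2 : Bc q (n+1) + Bc q n = Ic q n := by
  rw [Bc, card_TF_succ, Bc, card_TF_eq_sum, Ic, Finset.card_eq_sum_ones,
    ← Finset.sum_add_distrib]
  refine Finset.sum_congr rfl fun y hy => ?_
  rw [mem_TF] at hy
  obtain ⟨hlen, hirr, -⟩ := hy
  subst hlen
  obtain ⟨y0, y1, y2, y3, y4, t, rfl⟩ := exists5 (by simpa using hn)
  rw [fiber_P1 hirr, P1_cons]
  by_cases h02 : y0 = y2
  · rw [if_pos h02, if_pos h02]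
  · rw [if_neg h02, if_neg h02]

lemma id3 : Qc q (n+1) + (Bc q n + Dc q n) = Ic q n := by
  rw [Qc, card_TF_succ, Bc, card_TF_eq_sum, Dc, card_TF_eq_sum, Ic,
    Finset.card_eq_sum_ones, ← Finset.sum_add_distrib, ← Finset.sum_add_distrib]
  refine Finset.sum_congr rfl fun y hy => ?_
  rw [mem_TF] at hy
  obtain ⟨hlen, hirr, -⟩ := hy
  subst hlen
  obtain ⟨y0, y1, y2, y3, y4, t, rfl⟩ := exists5 (by simpa using hn)
  have h23 : y2 ≠ y3 := ne01 (irr_tail (irr_tail hirr))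
  rw [fiber_Qp hirr, P1_cons, P3_cons]
  by_cases h02 : y0 = y2
  · have h3 : ¬ (y0 = y3 ∧ y1 = y4) := fun h => h23 (h02 ▸ h.1 ▸ rfl)
    rw [if_pos (Or.inl h02), if_pos h02, if_neg h3]
    omega
  · by_cases h3 : y0 = y3 ∧ y1 = y4
    · rw [if_pos (Or.inr h3), if_neg h02, if_pos h3]
      omega
    · rw [if_neg (by tauto), if_neg h02, if_neg h3]
      omega

lemma id4 : Dc q (n+1) + Dc q n = Qc q n := by
  rw [Dc, card_TF_succ, Dc, card_TF_eq_sum, Qc, card_TF_eq_sum,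
    ← Finset.sum_add_distrib]
  refine Finset.sum_congr rfl fun y hy => ?_
  rw [mem_TF] at hy
  obtain ⟨hlen, hirr, -⟩ := hy
  subst hlen
  obtain ⟨y0, y1, y2, y3, y4, t, rfl⟩ := exists5 (by simpa using hn)
  rw [fiber_P3 hirr, P3_cons, Qp_cons]
  by_cases h03 : y0 = y3
  · by_cases h14 : y1 = y4
    · rw [if_neg (fun h => h.2 ⟨h03, h14⟩), if_pos ⟨h03, h14⟩, if_pos h03]
    · rw [if_pos ⟨h03, fun h => h14 h.2⟩, if_neg (fun h => h14 h.2), if_pos h03]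
  · rw [if_neg (fun h => h03 h.1), if_neg (fun h => h03 h.1), if_neg h03]

lemma bBQ : Bc q n + Qc q n ≤ Ic q n := by
  rw [Bc, card_TF_eq_sum, Qc, card_TF_eq_sum, Ic, Finset.card_eq_sum_ones,
    ← Finset.sum_add_distrib]
  refine Finset.sum_le_sum fun y hy => ?_
  rw [mem_TF] at hy
  obtain ⟨hlen, hirr, -⟩ := hy
  subst hlen
  obtain ⟨y0, y1, y2, y3, y4, t, rfl⟩ := exists5 (by simpa using hn)
  have h23 : y2 ≠ y3 := ne01 (irr_tail (irr_tail hirr))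
  rw [P1_cons, Qp_cons]
  by_cases h02 : y0 = y2
  · have h03 : ¬ y0 = y3 := fun h => h23 (h02 ▸ h ▸ rfl)
    rw [if_pos h02, if_neg h03]
  · by_cases h03 : y0 = y3
    · rw [if_neg h02, if_pos h03]
    · rw [if_neg h02, if_neg h03]
      omega

lemma bDQ : Dc q n ≤ Qc q n := by
  rw [Dc, card_TF_eq_sum, Qc, card_TF_eq_sum]
  refine Finset.sum_le_sum fun y hy => ?_
  rw [mem_TF] at hy
  obtain ⟨hlen, hirr, -⟩ := hy
  subst hlen
  obtain ⟨y0, y1, y2, y3, y4, t, rfl⟩ := exists5 (by simpa using hn)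
  rw [P3_cons, Qp_cons]
  by_cases h03 : y0 = y3
  · by_cases h14 : y1 = y4
    · rw [if_pos ⟨h03, h14⟩, if_pos h03]
    · rw [if_neg (fun h => h14 h.2), if_pos h03]
      omega
  · rw [if_neg (fun h => h03 h.1), if_neg h03]

end Counts

lemma Ic5_pos (hq : 3 ≤ q) : 1 ≤ Ic q 5 := by
  classical
  have h0 : (0 : ℕ) < q := by omega
  have h1 : (1 : ℕ) < q := by omega
  have h2 : (2 : ℕ) < q := by omega
  set a : Fin q := ⟨0, h0⟩ with hadef
  set b : Fin q := ⟨1, h1⟩ with hbdef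
  set c : Fin q := ⟨2, h2⟩ with hcdef
  have ha : a.val = 0 := rfl
  have hb : b.val = 1 := rfl
  have hc : c.val = 2 := rfl
  have hirr : IrreducibleStr q [a, b, c, a, b] := by
    refine ⟨fun u hu => ?_, fun u v huv => ?_, fun u v w huvw => ?_⟩
    · simp only [List.infix_cons_iff, List.cons_prefix_cons, List.prefix_nil,
        List.infix_nil, List.cons_ne_nil, or_false, List.nil_prefix, and_true,
        List.cons.injEq, and_false, false_and, Fin.ext_iff, ha, hb, hc] at hu
      omega
    · simp only [List.infix_cons_iff, List.cons_prefix_cons, List.prefix_nil,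
        List.infix_nil, List.cons_ne_nil, or_false, List.nil_prefix, and_true,
        List.cons.injEq, and_false, false_and, Fin.ext_iff, ha, hb, hc] at huv
      omega
    · simp only [List.infix_cons_iff, List.cons_prefix_cons, List.prefix_nil,
        List.infix_nil, List.cons_ne_nil, or_false, List.nil_prefix, and_true,
        List.cons.injEq, and_false, false_and, Fin.ext_iff, ha, hb, hc] at huvw
  rw [Ic, Finset.one_le_card]
  exact ⟨[a, b, c, a, b], mem_TF.2 ⟨rfl, hirr, trivial⟩⟩

-- ===== analysis =====
section Analysis
open Real Filter

lemma IrrCount_eq' (q n : ℕ) :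
    Set.ncard {x : List (Fin q) | x.length = n ∧ IrreducibleStr q x} = Ic q n := by
  classical
  rw [Ic, ← Set.ncard_coe_finset]
  congr 1
  ext x
  simp [mem_TF]

lemma tendsto_aux (C L : ℝ) :
    Tendsto (fun n : ℕ => (C + ((n : ℝ) - 5) * L) / n) atTop (nhds L) := by
  have h1 : Tendsto (fun n : ℕ => (C - 5 * L) / n + L) atTop (nhds L) := by
    have := (tendsto_const_div_atTop_nhds_zero_nat (C - 5 * L)).add_const L
    simpa using this
  refine h1.congr' ?_
  filter_upwards [eventually_ge_atTop 1] with n hn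
  have hn0 : (n : ℝ) ≠ 0 := by
    have : (0:ℝ) < n := by exact_mod_cast hn
    exact ne_of_gt this
  field_simp
  ring

set_option maxHeartbeats 1000000 in
lemma main_tendsto (hq : 3 ≤ q) {r : ℝ} (hr : 0 < r)
    (hroot : r ^ 3 - ((q : ℝ) - 2) * r ^ 2 - ((q : ℝ) - 3) * r - ((q : ℝ) - 2) = 0) :
    Tendsto (fun n : ℕ => Real.logb 2 (Ic q n) / n) atTop (nhds (Real.logb 2 r)) := by
  have hq' : (3 : ℝ) ≤ (q : ℝ) := by exact_mod_cast hq
  have hr0 : r ≠ 0 := ne_of_gt hr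
  have hs : (0:ℝ) < r ^ 2 + r + 1 := by positivity
  have hs0 : r ^ 2 + r + 1 ≠ 0 := ne_of_gt hs
  have hrgt : (q : ℝ) - 2 < r := by nlinarith [sq_nonneg r, mul_pos hr hr]
  set β : ℝ := ((q : ℝ) - 2)/r - 1 with hβdef
  set γ : ℝ := -1/(r ^ 2 + r + 1) with hγdef
  set δ : ℝ := -r/(r ^ 2 + r + 1) with hδdef
  have w1 : (q : ℝ) - 1 + β + γ = r := by
    rw [hβdef, hγdef]; field_simp; linear_combination (-(r + 1)) * hroot
  have w2 : -1 - β - γ = r * β := by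
    rw [hβdef, hγdef]; field_simp; linear_combination (r + 1) * hroot
  have w3 : δ = r * γ := by rw [hγdef, hδdef]; field_simp
  have w4 : -1 - γ - δ = r * δ := by
    rw [hγdef, hδdef]; field_simp; ring
  have hβ0 : β ≤ 0 := by
    rw [hβdef]
    have : ((q : ℝ) - 2)/r ≤ 1 := by
      rw [div_le_one hr]; linarith
    linarith
  have hγ0 : γ ≤ 0 := by
    rw [hγdef]
    apply div_nonpos_of_nonpos_of_nonneg <;> linarith
  have hδ0 : δ ≤ 0 := by
    rw [hδdef]
    apply div_nonpos_of_nonpos_of_nonneg <;> linarith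
  have hβ1 : 0 < 1 + β := by
    rw [hβdef]
    have : 0 < ((q : ℝ) - 2)/r := by
      apply div_pos; linarith; exact hr
    linarith
  have hγ1 : 0 < 1 + γ := by
    rw [hγdef]
    have h : (1:ℝ) + (-1/(r^2+r+1)) = (r^2+r)/(r^2+r+1) := by field_simp; ring
    rw [h]; positivity
  have hγδ1 : 0 < 1 + γ + δ := by
    rw [hγdef, hδdef]
    have h : (1:ℝ) + (-1/(r^2+r+1)) + (-r/(r^2+r+1)) = r^2/(r^2+r+1) := by field_simp; ring
    rw [h]; positivity
  set S : ℕ → ℝ := fun n =>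
    (Ic q n : ℝ) + β * (Bc q n : ℝ) + γ * (Qc q n : ℝ) + δ * (Dc q n : ℝ) with hSdef
  have h1q : (1:ℕ) ≤ q := by omega
  have hstep : ∀ n, 5 ≤ n → S (n+1) = r * S n := by
    intro n hn
    have e1 : (Ic q (n+1) : ℝ) + (Bc q n : ℝ) + (Dc q n : ℝ) = ((q:ℝ) - 1) * (Ic q n : ℝ) := by
      have h := congrArg (Nat.cast : ℕ → ℝ) (id1 hq hn)
      push_cast [Nat.cast_sub h1q] at h
      linarith
    have e2 : (Bc q (n+1) : ℝ) + (Bc q n : ℝ) = (Ic q n : ℝ) := by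
      exact_mod_cast congrArg (Nat.cast : ℕ → ℝ) (id2 hq hn)
    have e3 : (Qc q (n+1) : ℝ) + ((Bc q n : ℝ) + (Dc q n : ℝ)) = (Ic q n : ℝ) := by
      exact_mod_cast congrArg (Nat.cast : ℕ → ℝ) (id3 hq hn)
    have e4 : (Dc q (n+1) : ℝ) + (Dc q n : ℝ) = (Qc q n : ℝ) := by
      exact_mod_cast congrArg (Nat.cast : ℕ → ℝ) (id4 hq hn)
    simp only [hSdef]
    linear_combination e1 + β * e2 + γ * e3 + δ * e4 + (Ic q n : ℝ) * w1 +
      (Bc q n : ℝ) * w2 + (Qc q n : ℝ) * w3 + (Dc q n : ℝ) * w4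
  set ε : ℝ := min 1 (min (1 + β) (min (1 + γ) (1 + γ + δ))) with hεdef
  have hεpos : 0 < ε := by
    rw [hεdef]
    simp only [lt_min_iff]
    refine ⟨one_pos, hβ1, hγ1, hγδ1⟩
  have hε1 : ε ≤ 1 := min_le_left _ _
  have hεβ : ε ≤ 1 + β := le_trans (min_le_right _ _) (min_le_left _ _)
  have hεγ : ε ≤ 1 + γ := le_trans (min_le_right _ _) (le_trans (min_le_right _ _) (min_le_left _ _))
  have hεγδ : ε ≤ 1 + γ + δ :=
    le_trans (min_le_right _ _) (le_trans (min_le_right _ _) (min_le_right _ _))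
  have hub : ∀ n, S n ≤ (Ic q n : ℝ) := by
    intro n
    simp only [hSdef]
    have hB : (0:ℝ) ≤ (Bc q n : ℝ) := Nat.cast_nonneg _
    have hQ : (0:ℝ) ≤ (Qc q n : ℝ) := Nat.cast_nonneg _
    have hD : (0:ℝ) ≤ (Dc q n : ℝ) := Nat.cast_nonneg _
    nlinarith [mul_nonpos_of_nonpos_of_nonneg hβ0 hB,
      mul_nonpos_of_nonpos_of_nonneg hγ0 hQ, mul_nonpos_of_nonpos_of_nonneg hδ0 hD]
  have hlb : ∀ n, 5 ≤ n → ε * (Ic q n : ℝ) ≤ S n := by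
    intro n hn
    have hBQ : (Bc q n : ℝ) + (Qc q n : ℝ) ≤ (Ic q n : ℝ) := by
      exact_mod_cast bBQ hq hn
    have hDQ : (Dc q n : ℝ) ≤ (Qc q n : ℝ) := by exact_mod_cast bDQ hq hn
    have hB : (0:ℝ) ≤ (Bc q n : ℝ) := Nat.cast_nonneg _
    have hD : (0:ℝ) ≤ (Dc q n : ℝ) := Nat.cast_nonneg _
    have key : S n - ε * (Ic q n : ℝ) =
        (1 - ε) * ((Ic q n : ℝ) - (Bc q n : ℝ) - (Qc q n : ℝ))
        + ((1 + β) - ε) * (Bc q n : ℝ)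
        + ((1 + γ) - ε) * ((Qc q n : ℝ) - (Dc q n : ℝ))
        + ((1 + γ + δ) - ε) * (Dc q n : ℝ) := by
      simp only [hSdef]; ring
    have t1 : (0:ℝ) ≤ (1 - ε) * ((Ic q n : ℝ) - (Bc q n : ℝ) - (Qc q n : ℝ)) :=
      mul_nonneg (by linarith) (by linarith)
    have t2 : (0:ℝ) ≤ ((1 + β) - ε) * (Bc q n : ℝ) := mul_nonneg (by linarith) hB
    have t3 : (0:ℝ) ≤ ((1 + γ) - ε) * ((Qc q n : ℝ) - (Dc q n : ℝ)) :=
      mul_nonneg (by linarith) (by linarith)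
    have t4 : (0:ℝ) ≤ ((1 + γ + δ) - ε) * (Dc q n : ℝ) := mul_nonneg (by linarith) hD
    linarith
  have hI5 : (1:ℝ) ≤ (Ic q 5 : ℝ) := by exact_mod_cast Ic5_pos hq
  have hS5pos : 0 < S 5 := by
    have := hlb 5 (le_refl 5)
    nlinarith
  have hgeo : ∀ m, S (5 + m) = S 5 * r ^ m := by
    intro m
    induction m with
    | zero => simp
    | succ m ih =>
      have : 5 + (m + 1) = (5 + m) + 1 := by omega
      rw [this, hstep (5 + m) (by omega), ih, pow_succ]
      ring
  -- two-sided bounds on Ic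
  have hbound : ∀ n, 5 ≤ n →
      ε * r ^ (n - 5) ≤ (Ic q n : ℝ) ∧ (Ic q n : ℝ) ≤ ((Ic q 5 : ℝ)/ε) * r ^ (n - 5) := by
    intro n hn
    have hrw : n = 5 + (n - 5) := by omega
    have hSn : S n = S 5 * r ^ (n - 5) := by
      conv_lhs => rw [hrw]
      exact hgeo (n - 5)
    have hrpow : (0:ℝ) < r ^ (n - 5) := pow_pos hr _
    constructor
    · have h1 : ε ≤ S 5 := by
        have := hlb 5 (le_refl 5)
        nlinarith
      have h2 : ε * r ^ (n - 5) ≤ S 5 * r ^ (n - 5) :=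
        mul_le_mul_of_nonneg_right h1 (le_of_lt hrpow)
      have h2' : ε * r ^ (n - 5) ≤ S n := by rw [hSn]; exact h2
      have h3 := hub n
      linarith
    · have h1 : S 5 ≤ (Ic q 5 : ℝ) := hub 5
      have h2 : ε * (Ic q n : ℝ) ≤ S 5 * r ^ (n - 5) := by
        rw [← hSn]; exact hlb n hn
      have h3 : S 5 * r ^ (n - 5) ≤ (Ic q 5 : ℝ) * r ^ (n - 5) :=
        mul_le_mul_of_nonneg_right h1 (le_of_lt hrpow)
      rw [div_mul_eq_mul_div, le_div_iff₀ hεpos]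
      nlinarith
  -- squeeze on logs
  set L : ℝ := Real.logb 2 r with hLdef
  have h2 : (1:ℝ) < 2 := one_lt_two
  have hlow : ∀ᶠ n : ℕ in atTop,
      (Real.logb 2 ε + ((n:ℝ) - 5) * L) / n ≤ Real.logb 2 (Ic q n : ℝ) / n := by
    filter_upwards [eventually_ge_atTop 5] with n hn
    have hb := (hbound n hn).1
    have hrpow : (0:ℝ) < r ^ (n - 5) := pow_pos hr _
    have hlog : Real.logb 2 (ε * r ^ (n - 5)) ≤ Real.logb 2 (Ic q n : ℝ) :=
      Real.logb_le_logb_of_le h2 (by positivity) hb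
    rw [Real.logb_mul (ne_of_gt hεpos) (ne_of_gt hrpow), Real.logb_pow] at hlog
    have hcast : ((n - 5 : ℕ) : ℝ) = (n:ℝ) - 5 := by
      push_cast [Nat.cast_sub hn]; ring
    rw [hcast] at hlog
    have hnpos : (0:ℝ) ≤ (n:ℝ) := Nat.cast_nonneg n
    apply div_le_div_of_nonneg_right _ hnpos
    rw [hLdef]
    linarith
  have hhigh : ∀ᶠ n : ℕ in atTop,
      Real.logb 2 (Ic q n : ℝ) / n ≤ (Real.logb 2 ((Ic q 5 : ℝ)/ε) + ((n:ℝ) - 5) * L) / n := by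
    filter_upwards [eventually_ge_atTop 5] with n hn
    have hb := (hbound n hn).2
    have hb' := (hbound n hn).1
    have hrpow : (0:ℝ) < r ^ (n - 5) := pow_pos hr _
    have hIpos : (0:ℝ) < (Ic q n : ℝ) := lt_of_lt_of_le (by positivity) hb'
    have hc2pos : (0:ℝ) < (Ic q 5 : ℝ)/ε := by positivity
    have hlog : Real.logb 2 (Ic q n : ℝ) ≤ Real.logb 2 (((Ic q 5 : ℝ)/ε) * r ^ (n - 5)) :=
      Real.logb_le_logb_of_le h2 hIpos hb
    rw [Real.logb_mul (ne_of_gt hc2pos) (ne_of_gt hrpow), Real.logb_pow] at hlog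
    have hcast : ((n - 5 : ℕ) : ℝ) = (n:ℝ) - 5 := by
      push_cast [Nat.cast_sub hn]; ring
    rw [hcast] at hlog
    have hnpos : (0:ℝ) ≤ (n:ℝ) := Nat.cast_nonneg n
    apply div_le_div_of_nonneg_right _ hnpos
    rw [hLdef]
    linarith
  exact tendsto_of_tendsto_of_tendsto_of_le_of_le'
    (tendsto_aux (Real.logb 2 ε) L) (tendsto_aux (Real.logb 2 ((Ic q 5 : ℝ)/ε)) L)
    hlow hhigh

end Analysis
-- root uniqueness
lemma root_unique {q : ℕ} (hq : 3 ≤ q) {r s : ℝ} (hr : 0 < r) (hs : 0 < s)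
    (h1 : r ^ 3 - ((q:ℝ)-2) * r ^ 2 - ((q:ℝ)-3) * r - ((q:ℝ)-2) = 0)
    (h2 : s ^ 3 - ((q:ℝ)-2) * s ^ 2 - ((q:ℝ)-3) * s - ((q:ℝ)-2) = 0) : r = s := by
  have hq' : (3:ℝ) ≤ (q:ℝ) := by exact_mod_cast hq
  have main : ∀ a b : ℝ, 0 < a → 0 < b →
      a ^ 3 - ((q:ℝ)-2) * a ^ 2 - ((q:ℝ)-3) * a - ((q:ℝ)-2) = 0 →
      b ^ 3 - ((q:ℝ)-2) * b ^ 2 - ((q:ℝ)-3) * b - ((q:ℝ)-2) = 0 → ¬ (a < b) := by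
    intro a b ha hb hra hrb hab
    have hsr : (0:ℝ) < b - a := by linarith
    have key : ((q:ℝ)-2) * (a^2*b^2*(b-a)) + ((q:ℝ)-3) * (a*b*((b-a)*(b+a)))
        + ((q:ℝ)-2) * ((b-a)*(b^2+b*a+a^2)) = 0 := by
      linear_combination a^3 * hrb - b^3 * hra
    have t1 : (0:ℝ) < ((q:ℝ)-2) * (a^2*b^2*(b-a)) :=
      mul_pos (by linarith) (mul_pos (mul_pos (pow_pos ha 2) (pow_pos hb 2)) hsr)
    have t2 : (0:ℝ) ≤ ((q:ℝ)-3) * (a*b*((b-a)*(b+a))) :=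
      mul_nonneg (by linarith)
        (mul_nonneg (mul_pos ha hb).le (mul_nonneg hsr.le (by linarith)))
    have t3 : (0:ℝ) < ((q:ℝ)-2) * ((b-a)*(b^2+b*a+a^2)) :=
      mul_pos (by linarith) (mul_pos hsr (by positivity))
    linarith
  rcases lt_trichotomy r s with h | h | h
  · exact absurd h (main r s hr hs h1 h2)
  · exact h
  · exact absurd h (main s r hs hr h2 h1)

end ZEC

/-- for every `q ≥ 3`, the polynomial `x³ − (q−2)x² − (q−3)x − (q−2)` has
a unique positive real root `r`, and `ι_q = lim_{n→∞} (1/n) log₂ I_q(n)` exists and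
equals `log₂ r`. -/
theorem iota_eq_logb_root (q : ℕ) (hq : 3 ≤ q) :
    (∃! r : ℝ, 0 < r ∧
      r ^ 3 - ((q : ℝ) - 2) * r ^ 2 - ((q : ℝ) - 3) * r - ((q : ℝ) - 2) = 0) ∧
    ∀ r : ℝ, 0 < r →
      r ^ 3 - ((q : ℝ) - 2) * r ^ 2 - ((q : ℝ) - 3) * r - ((q : ℝ) - 2) = 0 →
      Filter.Tendsto (fun n : ℕ => Real.logb 2 (IrrCount q n) / n)
        Filter.atTop (nhds (Real.logb 2 r)) := by
  have hq' : (3:ℝ) ≤ (q:ℝ) := by exact_mod_cast hq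
  have h0q : (0:ℝ) ≤ (q:ℝ) := by linarith
  have hcont : Continuous (fun x : ℝ =>
      x ^ 3 - ((q : ℝ) - 2) * x ^ 2 - ((q : ℝ) - 3) * x - ((q : ℝ) - 2)) := by continuity
  have hf0 : (0:ℝ) ^ 3 - ((q : ℝ) - 2) * 0 ^ 2 - ((q : ℝ) - 3) * 0 - ((q : ℝ) - 2) ≤ 0 := by
    norm_num; linarith
  have hfq : 0 ≤ (q:ℝ) ^ 3 - ((q : ℝ) - 2) * (q:ℝ) ^ 2 - ((q : ℝ) - 3) * (q:ℝ) - ((q : ℝ) - 2) := by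
    nlinarith
  obtain ⟨r, hrmem, hfr⟩ :=
    intermediate_value_Icc h0q hcont.continuousOn ⟨hf0, hfq⟩
  have hrpos : 0 < r := by
    rcases eq_or_lt_of_le hrmem.1 with h | h
    · exfalso
      rw [← h] at hfr
      norm_num at hfr
      linarith
    · exact h
  refine ⟨⟨r, ⟨hrpos, hfr⟩, fun s hs => ZEC.root_unique hq hs.1 hrpos hs.2 hfr⟩, ?_⟩
  intro s hs hroot
  have h := ZEC.main_tendsto hq hs hroot
  have heq : (fun n : ℕ => Real.logb 2 (IrrCount q n) / n)
      = fun n : ℕ => Real.logb 2 (ZEC.Ic q n) / n := by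
    funext n
    simp only [IrrCount, ZEC.IrrCount_eq']
  rw [heq]
  exact h
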